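/- Let g ≥ 1, let M be a g×g complex matrix that is Hermitian positive definite, let b : Fin 2g → ℂ^g be a family of vectors forming a basis of ℂ^g viewed as a real vector space, let a ∈ ℂ^g, and let f : ℂ^g → ℂ be an entire function such that for every z ∈ ℂ^g and every index i one has f(z + b i) − f(z) = Σ_{j,k} a_j · M_{jk} · conj((b i)_k). Then a = 0. -/

import Mathlib

open Complex BigOperators
open scoped ComplexOrder

/-- An entire additive function `ℂ → ℂ` is complex-linear. -/
lemma entire_additive_linear (φ : ℂ → ℂ) (hd : Differentiable ℂ φ)
    (hadd : ∀ s t : ℂ, φ (s + t) = φ s + φ t) : ∀ t : ℂ, φ t = t * φ 1 := by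
  have h0 : φ 0 = 0 := by
    have := hadd 0 0; simpa using this
  set d := deriv φ 0 with hdd
  have hd0 : HasDerivAt φ d 0 := (hd 0).hasDerivAt
  have hds : ∀ s : ℂ, HasDerivAt φ d s := by
    intro s
    have h1 : HasDerivAt (fun t : ℂ => φ (t - s)) (d * 1) s := by
      refine HasDerivAt.comp s ?_ ((hasDerivAt_id s).sub_const s)
      simpa using hd0
    have h2 : HasDerivAt (fun t : ℂ => φ s + φ (t - s)) (d * 1) s := h1.const_add (φ s)
    have heq : (fun t : ℂ => φ s + φ (t - s)) = φ := by
      funext t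
      rw [← hadd s (t - s)]
      ring_nf
    rw [heq] at h2
    simpa using h2
  have hconst : ∀ t : ℂ, φ t - d * t = φ 0 - d * 0 := by
    intro t
    have hψ : ∀ s : ℂ, HasDerivAt (fun u : ℂ => φ u - d * u) 0 s := by
      intro s
      have := (hds s).sub ((hasDerivAt_id s).const_mul d)
      rw [mul_one, sub_self] at this
      exact this
    exact is_const_of_deriv_eq_zero (fun s => (hψ s).differentiableAt)
      (fun s => (hψ s).deriv) t 0
  have hlin : ∀ t : ℂ, φ t = d * t := by
    intro t
    have h := hconst t
    rw [h0] at h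
    simp only [mul_zero, sub_zero, sub_eq_zero] at h
    exact h
  intro t
  rw [hlin t, hlin 1, mul_one, mul_comm]

/-- let `M` be a Hermitian positive definite `g×g` complex matrix,
`b` a family of `2g` vectors forming a real basis of `ℂ^g`, `a ∈ ℂ^g`, and `f`
entire with `f(z + b i) − f(z) = Σ_{j,k} a_j M_{jk} conj((b i)_k)` for all `z, i`.
Then `a = 0`. -/
theorem coefficients_vanish_of_coboundary {g : ℕ} (hg : 1 ≤ g)
    (M : Matrix (Fin g) (Fin g) ℂ) (hM : M.PosDef)
    (b : Fin (2 * g) → Fin g → ℂ)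
    (hli : LinearIndependent ℝ b)
    (hspan : Submodule.span ℝ (Set.range b) = (⊤ : Submodule ℝ (Fin g → ℂ)))
    (a : Fin g → ℂ)
    (f : (Fin g → ℂ) → ℂ) (hf : Differentiable ℂ f)
    (hcob : ∀ (z : Fin g → ℂ) (i : Fin (2 * g)),
      f (z + b i) - f z = ∑ j, ∑ k, a j * M j k * (starRingEnd ℂ) (b i k)) :
    a = 0 := by
  classical
  set A : (Fin g → ℂ) → ℂ := fun v => ∑ j, ∑ k, a j * M j k * (starRingEnd ℂ) (v k) with hA
  -- Step 1: `z ↦ f (z + w) - f z` is constant for every `w`.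
  have key : ∀ w z : Fin g → ℂ, f (z + w) - f z = f w - f 0 := by
    intro w
    set G : (Fin g → ℂ) → ℂ := fun z => f (z + w) - f z with hG
    have hGd : Differentiable ℂ G :=
      (hf.comp (differentiable_id.add_const w)).sub hf
    -- periodicity along each b i
    have hper : ∀ (i : Fin (2 * g)) (z : Fin g → ℂ), G (z + b i) = G z := by
      intro i z
      have h1 := hcob (z + w) i
      have h2 := hcob z i
      have hcomm : z + w + b i = z + b i + w := by abel
      rw [hcomm] at h1
      simp only [hG]
      linear_combination h1 - h2
    -- the set of periods is an additive subgroup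
    let P : AddSubgroup (Fin g → ℂ) :=
      { carrier := { v | ∀ z, G (z + v) = G z }
        zero_mem' := by intro z; simp
        add_mem' := by
          intro u v hu hv z
          have : z + (u + v) = z + u + v := by abel
          rw [this, hv (z + u), hu z]
        neg_mem' := by
          intro v hv z
          have h := hv (z + -v)
          have : z + -v + v = z := by abel
          rw [this] at h
          exact h.symm }
    have hbP : ∀ i, b i ∈ P := hper
    -- boundedness via the fundamental parallelepiped
    have hbound : Bornology.IsBounded (Set.range G) := by
      set φ : (Fin (2 * g) → ℝ) → (Fin g → ℂ) := fun t => ∑ i, t i • b i with hφ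
      have hφc : Continuous φ := by
        apply continuous_finset_sum
        intro i _
        exact (continuous_apply i).smul continuous_const
      set K : Set (Fin g → ℂ) :=
        φ '' Set.univ.pi (fun _ : Fin (2 * g) => Set.Icc (0 : ℝ) 1) with hK
      have hKc : IsCompact K :=
        (isCompact_univ_pi fun _ => isCompact_Icc).image hφc
      have hsub : Set.range G ⊆ G '' K := by
        rintro x ⟨z, rfl⟩
        set B : Module.Basis (Fin (2 * g)) ℝ (Fin g → ℂ) := Module.Basis.mk hli hspan.ge with hB
        set t : Fin (2 * g) → ℝ := fun i => B.repr z i with ht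
        have hz : ∑ i, t i • b i = z := by
          have := B.sum_repr z
          simpa [hB, ht, Module.Basis.mk_apply] using this
        refine ⟨φ (fun i => Int.fract (t i)), ⟨_, fun i _ =>
          ⟨Int.fract_nonneg _, (Int.fract_lt_one _).le⟩, rfl⟩, ?_⟩
        have hmem : (∑ i, (⌊t i⌋ : ℝ) • b i) ∈ P := by
          refine sum_mem fun i _ => ?_
          rw [show ((⌊t i⌋ : ℝ)) • b i = (⌊t i⌋ : ℤ) • b i from
            Int.cast_smul_eq_zsmul ℝ _ _]
          exact zsmul_mem (hbP i) _
        have hz2 : z = φ (fun i => Int.fract (t i)) + ∑ i, (⌊t i⌋ : ℝ) • b i := by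
          rw [← hz, hφ]
          rw [← Finset.sum_add_distrib]
          refine Finset.sum_congr rfl fun i _ => ?_
          rw [← add_smul, Int.fract_add_floor]
        rw [hz2]
        exact (hmem _).symm
      exact ((hKc.image hGd.continuous).isBounded).subset hsub
    intro z
    have := hGd.apply_eq_apply_of_bounded hbound z 0
    simpa [hG] using this
  -- Step 2: L v := f v - f 0 is ℂ-homogeneous along lines
  have hadd : ∀ z w : Fin g → ℂ, f (z + w) - f 0 = (f z - f 0) + (f w - f 0) := by
    intro z w
    have := key w z
    linear_combination this
  have hhom : ∀ (v : Fin g → ℂ) (t : ℂ), f (t • v) - f 0 = t * (f v - f 0) := by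
    intro v
    have := entire_additive_linear (fun t : ℂ => f (t • v) - f 0)
      ((hf.comp (differentiable_id.smul_const v)).sub_const (f 0))
      (by
        intro s u
        have h := hadd (s • v) (u • v)
        simpa [add_smul] using h)
    intro t
    simpa using this t
  -- Step 3: real-linear maps L and A agree on the basis, hence everywhere
  have hLA : ∀ v : Fin g → ℂ, f v - f 0 = A v := by
    have hAadd : ∀ u v : Fin g → ℂ, A (u + v) = A u + A v := by
      intro u v
      simp only [hA, Pi.add_apply, map_add, mul_add, Finset.sum_add_distrib]
    have hAsmul : ∀ (r : ℝ) (v : Fin g → ℂ), A (r • v) = r • A v := by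
      intro r v
      simp only [hA, Pi.smul_apply, real_smul, map_mul, Complex.conj_ofReal,
        smul_eq_mul, Finset.mul_sum]
      exact Finset.sum_congr rfl fun j _ => Finset.sum_congr rfl fun k _ => by ring
    let Llin : (Fin g → ℂ) →ₗ[ℝ] ℂ :=
      { toFun := fun v => f v - f 0
        map_add' := fun u v => by simpa using hadd u v
        map_smul' := fun r v => by
          have := hhom v (r : ℂ)
          have hc : (r : ℂ) • v = r • v := by
            funext k; simp [real_smul]
          rw [hc] at this
          simpa [real_smul] using this }
    let Alin : (Fin g → ℂ) →ₗ[ℝ] ℂ :=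
      { toFun := A
        map_add' := hAadd
        map_smul' := fun r v => by simpa using hAsmul r v }
    have hbasis : ∀ i, Llin (b i) = Alin (b i) := by
      intro i
      have := hcob 0 i
      simpa [Llin, Alin, hA] using this
    set B : Module.Basis (Fin (2 * g)) ℝ (Fin g → ℂ) := Module.Basis.mk hli hspan.ge with hB
    have : Llin = Alin := B.ext fun i => by
      simpa [hB, Module.Basis.mk_apply] using hbasis i
    intro v
    have := congrFun (congrArg (fun (L : (Fin g → ℂ) →ₗ[ℝ] ℂ) => (L : (Fin g → ℂ) → ℂ)) this) v
    simpa [Llin, Alin] using this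
  -- Step 4: compare at I • v to conclude A ≡ 0
  have hA0 : ∀ v : Fin g → ℂ, A v = 0 := by
    intro v
    have h1 : f (Complex.I • v) - f 0 = A (Complex.I • v) := hLA (Complex.I • v)
    have h2 : f (Complex.I • v) - f 0 = Complex.I * A v := by
      rw [hhom v Complex.I, hLA v]
    have h3 : A (Complex.I • v) = -Complex.I * A v := by
      simp only [hA, Pi.smul_apply, smul_eq_mul, map_mul, Complex.conj_I]
      rw [neg_mul, Finset.mul_sum, ← Finset.sum_neg_distrib]
      refine Finset.sum_congr rfl fun j _ => ?_
      rw [Finset.mul_sum, ← Finset.sum_neg_distrib]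
      refine Finset.sum_congr rfl fun k _ => ?_
      ring
    have h4 : Complex.I * A v = -Complex.I * A v := by
      rw [← h2, h1, h3]
    have : (2 * Complex.I) * A v = 0 := by linear_combination h4
    rcases mul_eq_zero.mp this with h | h
    · exfalso
      have : (Complex.I : ℂ) ≠ 0 := Complex.I_ne_zero
      simp [Complex.ext_iff] at h
    · exact h
  -- Step 5: positive definiteness forces a = 0
  by_contra ha
  have hsa : star a ≠ 0 := by
    intro h
    apply ha
    have := congrArg star h
    simpa using this
  have hpos := hM.dotProduct_mulVec_pos hsa
  have heq : dotProduct (star (star a)) (M.mulVec (star a)) = A a := by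
    simp only [dotProduct, Matrix.mulVec, star_star, hA]
    refine Finset.sum_congr rfl fun j _ => ?_
    rw [Finset.mul_sum]
    refine Finset.sum_congr rfl fun k _ => ?_
    simp [Pi.star_apply, RCLike.star_def]
    ring
  rw [heq, hA0 a] at hpos
  exact lt_irrefl 0 hpos
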